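/- Let G and H be residually finite groups, and let G ≀ H = G^{(H)} ⋊ H be their restricted wreath product, where G^{(H)} is the group of functions H → G equal to the identity outside a finite set and H acts by shifting indices. Then G ≀ H is residually finite if and only if H is finite or G is abelian. -/

import Mathlib

set_option linter.unusedSectionVars false
set_option maxHeartbeats 1000000

/-!
Statement 4 (Gruenberg): Let `G` and `H` be residually finite groups and let
`G ≀ H = G^{(H)} ⋊ H` be their restricted wreath product, where `G^{(H)}` is the group of
functions `H → G` equal to `1` outside a finite set and `H` acts by shifting indices,
`(h · f)(h') = f (h⁻¹ h')`.  Then `G ≀ H` is residually finite iff `H` is finite or `G`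
is abelian.
-/

noncomputable section

/-- `G^{(H)}`: the restricted product, i.e. the subgroup of `∏_H G` consisting of the
functions `H → G` equal to `1` outside a finite set. -/
def restrictedProd (G H : Type) [Group G] : Subgroup (H → G) where
  carrier := {f | (Function.mulSupport f).Finite}
  one_mem' := by simp [Function.mulSupport_one]
  mul_mem' := fun hf hg => (hf.union hg).subset (Function.mulSupport_mul _ _)
  inv_mem' := fun {f} hf => by
    simpa [Function.mulSupport_inv] using hf

/-- The shift automorphism of `G^{(H)}` associated to `h ∈ H`: `(h · f)(h') = f (h⁻¹ h')`. -/
def shiftAut (G H : Type) [Group G] [Group H] (h : H) :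
    restrictedProd G H ≃* restrictedProd G H where
  toFun f := ⟨fun h' => (f : H → G) (h⁻¹ * h'),
    Set.Finite.preimage ((mul_right_injective h⁻¹).injOn) f.2⟩
  invFun f := ⟨fun h' => (f : H → G) (h * h'),
    Set.Finite.preimage ((mul_right_injective h).injOn) f.2⟩
  left_inv f := by
    ext h'
    simp
  right_inv f := by
    ext h'
    simp
  map_mul' f g := rfl

/-- The shift action of `H` on `G^{(H)}` by automorphisms. -/
def shiftHom (G H : Type) [Group G] [Group H] : H →* MulAut (restrictedProd G H) where
  toFun := shiftAut G H
  map_one' := by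
    ext f h'
    simp [shiftAut]
  map_mul' a b := by
    ext f h'
    simp [shiftAut, mul_assoc]

/-- The restricted wreath product `G ≀ H = G^{(H)} ⋊ H`. -/
abbrev RWreath (G H : Type) [Group G] [Group H] : Type :=
  restrictedProd G H ⋊[shiftHom G H] H

/-- A group is residually finite if every nontrivial element survives in some finite
quotient, i.e. avoids some finite-index normal subgroup. -/
def ResiduallyFinite (Q : Type) [Group Q] : Prop :=
  ∀ q : Q, q ≠ 1 → ∃ N : Subgroup Q, N.Normal ∧ N.FiniteIndex ∧ q ∉ N

open Function SemidirectProduct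
open scoped commutatorElement

namespace WRF

variable {G G' H : Type} [Group G] [Group G'] [Group H]

@[simp] lemma rp_coe_mul (f g : restrictedProd G H) (h : H) :
    ((f * g : restrictedProd G H) : H → G) h = (f : H → G) h * (g : H → G) h := rfl

@[simp] lemma rp_coe_inv (f : restrictedProd G H) (h : H) :
    ((f⁻¹ : restrictedProd G H) : H → G) h = ((f : H → G) h)⁻¹ := rfl

@[simp] lemma shiftHom_apply (h : H) (f : restrictedProd G H) (h' : H) :
    ((shiftHom G H h f : restrictedProd G H) : H → G) h' = (f : H → G) (h⁻¹ * h') := rfl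

open Classical in
/-- The element of `G^{(H)}` supported at `h0` with value `a`. -/
def delta (h0 : H) (a : G) : restrictedProd G H :=
  ⟨fun h => if h = h0 then a else 1, Set.Finite.subset (Set.finite_singleton h0)
    (fun x hx => by
      simp only [Function.mem_mulSupport] at hx
      by_contra hne
      simp only [Set.mem_singleton_iff] at hne
      exact hx (if_neg hne))⟩

open Classical in
@[simp] lemma delta_apply (h0 : H) (a : G) (h : H) :
    (delta h0 a : H → G) h = if h = h0 then a else 1 := rfl

lemma delta_same (h0 : H) (a : G) : (delta h0 a : H → G) h0 = a := by simp

lemma delta_mul (h0 : H) (a b : G) : delta h0 a * delta h0 b = delta (G := G) h0 (a * b) := by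
  ext h
  by_cases hh : h = h0 <;> simp [hh]

lemma delta_inv (h0 : H) (a : G) : (delta h0 a)⁻¹ = delta (G := G) h0 a⁻¹ := by
  ext h
  by_cases hh : h = h0 <;> simp [hh]

lemma delta_commute {h0 h1 : H} (hne : h0 ≠ h1) (a b : G) :
    delta h0 a * delta h1 b = delta h1 b * delta h0 a := by
  ext h
  by_cases hh : h = h0 <;> by_cases hh' : h = h1 <;> simp_all

lemma delta_commutator (h0 : H) (a b : G) :
    (⁅delta h0 a, delta h0 b⁆ : restrictedProd G H) = delta h0 ⁅a, b⁆ := by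
  rw [commutatorElement_def, commutatorElement_def, delta_inv, delta_inv, delta_mul,
    delta_mul, delta_mul]

lemma shift_delta (h : H) (h0 : H) (a : G) :
    shiftHom G H h (delta h0 a) = delta (h * h0) a := by
  ext h'
  simp only [shiftHom_apply, delta_apply]
  have hiff : h⁻¹ * h' = h0 ↔ h' = h * h0 := by
    constructor
    · intro e; rw [← e]; group
    · intro e; rw [e]; group
  by_cases hc : h⁻¹ * h' = h0
  · rw [if_pos hc, if_pos (hiff.1 hc)]
  · rw [if_neg hc, if_neg (fun e => hc (hiff.2 e))]

lemma exists_of_hom {Q F : Type} [Group Q] [Group F] [Finite F] (φ : Q →* F) {q : Q}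
    (hq : φ q ≠ 1) : ∃ N : Subgroup Q, N.Normal ∧ N.FiniteIndex ∧ q ∉ N :=
  ⟨φ.ker, inferInstance, inferInstance, by simpa [MonoidHom.mem_ker] using hq⟩

/-- Componentwise application of a homomorphism `G →* G'`. -/
def mapRP (φ : G →* G') : restrictedProd G H →* restrictedProd G' H where
  toFun f := ⟨fun h => φ ((f : H → G) h),
    f.2.subset (Function.mulSupport_comp_subset φ.map_one _)⟩
  map_one' := by ext h; simp
  map_mul' f g := by ext h; simp

@[simp] lemma mapRP_apply (φ : G →* G') (f : restrictedProd G H) (h : H) :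
    (mapRP φ f : H → G') h = φ ((f : H → G) h) := rfl

/-- The homomorphism `G ≀ H →* G' ≀ H` induced by `φ : G →* G'`. -/
def wreathMapFst (φ : G →* G') : RWreath G H →* RWreath G' H :=
  SemidirectProduct.map (mapRP φ) (MonoidHom.id H) (fun h => by
    ext f h'
    rfl)

instance instFiniteRP [Finite G] [Finite H] : Finite (restrictedProd G H) := by
  have : Finite (H → G) := inferInstance
  exact Subtype.finite

instance instFiniteSDP {N Q : Type} [Group N] [Group Q] [Finite N] [Finite Q]
    (φ : Q →* MulAut N) : Finite (N ⋊[φ] Q) := by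
  apply Finite.of_injective (fun x => (x.left, x.right))
  intro a b hab
  simp only [Prod.mk.injEq] at hab
  cases a; cases b
  simp_all

lemma normal_iInf' {ι : Type} {Q : Type} [Group Q] (f : ι → Subgroup Q)
    (h : ∀ i, (f i).Normal) : (⨅ i, f i).Normal :=
  ⟨fun n hn g => Subgroup.mem_iInf.2 fun i => (h i).conj_mem n (Subgroup.mem_iInf.1 hn i) g⟩

section CosetSum

variable {A H₀ : Type} [CommGroup A] [Group H₀] (K : Subgroup H₀) [K.Normal]

/-- Summation of a finitely supported function over the fibers of `H₀ → H₀ ⧸ K`. -/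
def cosetSumFun (f : H₀ → A) : H₀ ⧸ K → A :=
  fun y => ∏ᶠ x ∈ {x : H₀ | (QuotientGroup.mk x : H₀ ⧸ K) = y}, f x

lemma mulSupport_cosetSumFun (f : H₀ → A) :
    Function.mulSupport (cosetSumFun K f) ⊆ QuotientGroup.mk '' Function.mulSupport f := by
  intro y hy
  rw [Function.mem_mulSupport] at hy
  by_contra hc
  apply hy
  apply finprod_mem_eq_one_of_forall_eq_one
  intro x hx
  by_contra hfx
  exact hc ⟨x, Function.mem_mulSupport.2 hfx, hx⟩

/-- Summation over cosets, as a homomorphism `A^{(H₀)} →* A^{(H₀/K)}`. -/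
def cosetSum : restrictedProd A H₀ →* restrictedProd A (H₀ ⧸ K) where
  toFun f := ⟨cosetSumFun K (f : H₀ → A), (f.2.image _).subset (mulSupport_cosetSumFun K _)⟩
  map_one' := by
    ext y
    show cosetSumFun K ((1 : restrictedProd A H₀) : H₀ → A) y = 1
    have h1 : ((1 : restrictedProd A H₀) : H₀ → A) = fun _ => 1 := rfl
    rw [h1]
    exact finprod_mem_eq_one_of_forall_eq_one fun x _ => rfl
  map_mul' f g := by
    ext y
    show cosetSumFun K (↑(f * g)) y = cosetSumFun K (f : H₀ → A) y * cosetSumFun K (g : H₀ → A) y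
    have : ((f * g : restrictedProd A H₀) : H₀ → A) = (f : H₀ → A) * (g : H₀ → A) := rfl
    rw [this]
    show ∏ᶠ x ∈ _, ((f : H₀ → A) x * (g : H₀ → A) x) = _
    rw [finprod_mem_mul_distrib' (f.2.inter_of_right _) (g.2.inter_of_right _)]
    rfl

@[simp] lemma cosetSum_apply (f : restrictedProd A H₀) (y : H₀ ⧸ K) :
    (cosetSum K f : H₀ ⧸ K → A) y = cosetSumFun K (f : H₀ → A) y := rfl

lemma cosetSum_equivariant (h : H₀) (f : restrictedProd A H₀) :
    cosetSum K (shiftHom A H₀ h f) =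
      shiftHom A (H₀ ⧸ K) (QuotientGroup.mk h) (cosetSum K f) := by
  ext y
  show cosetSumFun K (fun h' => (f : H₀ → A) (h⁻¹ * h')) y
      = cosetSumFun K (f : H₀ → A) ((QuotientGroup.mk h : H₀ ⧸ K)⁻¹ * y)
  unfold cosetSumFun
  rw [← finprod_mem_image (s := {x : H₀ | (QuotientGroup.mk x : H₀ ⧸ K) = y})
    (g := fun x => h⁻¹ * x) ((mul_right_injective h⁻¹).injOn)]
  apply finprod_mem_inter_mulSupport_eq'
  intro x _
  constructor
  · rintro ⟨z, hz, rfl⟩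
    simp only [Set.mem_setOf_eq] at hz ⊢
    rw [← hz]
    simp [QuotientGroup.mk_mul, QuotientGroup.mk_inv, mul_assoc]
  · intro hx
    simp only [Set.mem_setOf_eq] at hx
    refine ⟨h * x, ?_, by group⟩
    simp only [Set.mem_setOf_eq, QuotientGroup.mk_mul, hx]
    group

lemma cosetSum_eval (f : restrictedProd A H₀) (h0 : H₀)
    (hsep : ∀ x ∈ Function.mulSupport (f : H₀ → A), x ≠ h0 → h0⁻¹ * x ∉ K) :
    (cosetSum K f : H₀ ⧸ K → A) (QuotientGroup.mk h0) = (f : H₀ → A) h0 := by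
  rw [cosetSum_apply]
  unfold cosetSumFun
  have hset : {x : H₀ | (QuotientGroup.mk x : H₀ ⧸ K) = QuotientGroup.mk h0}
      ∩ Function.mulSupport (f : H₀ → A) = {h0} ∩ Function.mulSupport (f : H₀ → A) := by
    ext x
    simp only [Set.mem_inter_iff, Set.mem_setOf_eq, Set.mem_singleton_iff]
    constructor
    · rintro ⟨hx, hs⟩
      refine ⟨?_, hs⟩
      by_contra hne
      exact hsep x hs hne (by rwa [← QuotientGroup.eq, eq_comm])
    · rintro ⟨rfl, hs⟩
      exact ⟨rfl, hs⟩
  calc ∏ᶠ x ∈ {x : H₀ | (QuotientGroup.mk x : H₀ ⧸ K) = QuotientGroup.mk h0}, (f : H₀ → A) x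
      = ∏ᶠ x ∈ ({h0} : Set H₀), (f : H₀ → A) x := by
        rw [← finprod_mem_inter_mulSupport, hset, finprod_mem_inter_mulSupport]
    _ = (f : H₀ → A) h0 := finprod_mem_singleton

/-- The homomorphism `A ≀ H₀ →* A ≀ (H₀/K)` given by summing over cosets. -/
def wreathMapSnd : RWreath A H₀ →* RWreath A (H₀ ⧸ K) :=
  SemidirectProduct.map (cosetSum K) (QuotientGroup.mk' K) (fun h => by
    ext f : 1
    exact cosetSum_equivariant K h f)

end CosetSum

end WRF

theorem wreath_residuallyFinite_iff (G H : Type) [Group G] [Group H]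
    (hG : ResiduallyFinite G) (hH : ResiduallyFinite H) :
    ResiduallyFinite (RWreath G H) ↔ (Finite H ∨ ∀ a b : G, a * b = b * a) := by
  constructor
  · -- If `G ≀ H` is RF then `H` finite or `G` abelian.
    intro hRF
    by_contra hcon
    push_neg at hcon
    obtain ⟨hHfin, a, b, hab⟩ := hcon
    haveI : Infinite H := hHfin
    have hc : (⁅a, b⁆ : G) ≠ 1 := fun h => hab (commutatorElement_eq_one_iff_mul_comm.1 h)
    set z : restrictedProd G H := WRF.delta (1 : H) ⁅a, b⁆ with hzdef
    have hz : z ≠ 1 := by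
      intro h
      apply hc
      have := congrArg (fun g : restrictedProd G H => (g : H → G) 1) h
      simpa [hzdef, WRF.delta_same] using this
    have hw : (inl z : RWreath G H) ≠ 1 := fun h => hz (inl_injective (by rw [h, map_one]))
    obtain ⟨N, hN1, hN2, hN3⟩ := hRF _ hw
    haveI := hN1
    haveI := hN2
    set φ : RWreath G H →* RWreath G H ⧸ N := QuotientGroup.mk' N with hφdef
    obtain ⟨h1, h2, hne, heq⟩ :=
      Finite.exists_ne_map_eq_of_infinite (fun h : H => φ (inr h))
    set h : H := h1⁻¹ * h2 with hhdef
    have hh : h ≠ 1 := fun e => hne (by rwa [hhdef, inv_mul_eq_one] at e)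
    have hφh : φ (inr h : RWreath G H) = 1 := by
      have e : (inr h : RWreath G H) = (inr h1)⁻¹ * inr h2 := by
        rw [hhdef, map_mul, map_inv]
      rw [e, map_mul, map_inv]
      rw [heq]
      exact inv_mul_cancel _
    set ψ : restrictedProd G H →* RWreath G H ⧸ N := φ.comp inl with hψdef
    have key : ψ (WRF.delta h b) = ψ (WRF.delta (1 : H) b) := by
      have e1 : (inl (WRF.delta h b) : RWreath G H)
          = inr h * inl (WRF.delta (1 : H) b) * inr h⁻¹ := by
        rw [← inl_aut h (WRF.delta (1 : H) b), WRF.shift_delta, mul_one]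
      show φ (inl (WRF.delta h b)) = φ (inl (WRF.delta (1 : H) b))
      rw [e1]
      simp only [map_mul, map_inv, hφh, inv_one, one_mul, mul_one]
    have hδcomm : (⁅WRF.delta (1 : H) a, WRF.delta h b⁆ : restrictedProd G H) = 1 :=
      commutatorElement_eq_one_iff_mul_comm.2 (WRF.delta_commute (Ne.symm hh) a b)
    have hfinal : φ (inl z) = 1 := by
      have hwz : z = ⁅WRF.delta (1 : H) a, WRF.delta (1 : H) b⁆ :=
        (WRF.delta_commutator (1 : H) a b).symm
      calc φ (inl z) = ψ ⁅WRF.delta (1 : H) a, WRF.delta (1 : H) b⁆ := by rw [hwz]; rfl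
        _ = ⁅ψ (WRF.delta (1 : H) a), ψ (WRF.delta (1 : H) b)⁆ := map_commutatorElement _ _ _
        _ = ⁅ψ (WRF.delta (1 : H) a), ψ (WRF.delta h b)⁆ := by rw [key]
        _ = ψ ⁅WRF.delta (1 : H) a, WRF.delta h b⁆ := (map_commutatorElement _ _ _).symm
        _ = 1 := by rw [hδcomm, map_one]
    exact hN3 ((QuotientGroup.eq_one_iff _).1 hfinal)
  · -- If `H` finite or `G` abelian then `G ≀ H` is RF.
    intro hcase w hw
    by_cases hrw : w.right = 1
    · -- `w` lies in the base group `G^{(H)}`.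
      have hw1 : w = inl w.left := by
        conv_lhs => rw [← inl_left_mul_inr_right w]
        rw [hrw, map_one, mul_one]
      have hfne : w.left ≠ 1 := fun h => hw (by rw [hw1, h, map_one])
      obtain ⟨h0, hh0⟩ : ∃ h0 : H, ((w.left : restrictedProd G H) : H → G) h0 ≠ 1 := by
        by_contra hcn
        push_neg at hcn
        exact hfne (Subtype.ext (funext fun x => hcn x))
      set f : restrictedProd G H := w.left with hfdef
      obtain ⟨M, hM1, hM2, hM3⟩ := hG _ hh0
      haveI := hM1
      haveI := hM2
      haveI : Finite (G ⧸ M) := M.finite_quotient_of_finiteIndex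
      rcases hcase with hHfin | hcomm
      · -- `H` finite: reduce mod `M` componentwise.
        haveI := hHfin
        apply WRF.exists_of_hom (WRF.wreathMapFst (H := H) (QuotientGroup.mk' M))
        intro hcon
        rw [hw1] at hcon
        have hval := congrArg
          (fun x : RWreath (G ⧸ M) H => ((x.left : restrictedProd (G ⧸ M) H) : H → G ⧸ M) h0)
          hcon
        have hl : ((WRF.wreathMapFst (H := H) (QuotientGroup.mk' M)) (inl f)).left
            = WRF.mapRP (QuotientGroup.mk' M) f := rfl
        simp only [hl, WRF.mapRP_apply] at hval
        have : QuotientGroup.mk ((f : H → G) h0) = (1 : G ⧸ M) := hval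
        exact hM3 ((QuotientGroup.eq_one_iff _).1 this)
      · -- `G` abelian: reduce mod `M` and a separating finite-index subgroup of `H`.
        letI : CommGroup (G ⧸ M) :=
          { (inferInstance : Group (G ⧸ M)) with
            mul_comm := fun x y =>
              QuotientGroup.induction_on x fun c =>
                QuotientGroup.induction_on y fun d => by
                  rw [← QuotientGroup.mk_mul, ← QuotientGroup.mk_mul, hcomm] }
        classical
        set T : Finset H := f.2.toFinset with hTdef
        set Nfun : H × H → Subgroup H := fun p =>
          if hp : p.1⁻¹ * p.2 ≠ 1 then (hH _ hp).choose else ⊤ with hNfundef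
        have hNrm : ∀ p : H × H, (Nfun p).Normal := fun p => by
          by_cases hp : p.1⁻¹ * p.2 ≠ 1
          · simp only [hNfundef, dif_pos hp]; exact (hH _ hp).choose_spec.1
          · simp only [hNfundef, dif_neg hp]; infer_instance
        have hFI : ∀ p : H × H, (Nfun p).FiniteIndex := fun p => by
          by_cases hp : p.1⁻¹ * p.2 ≠ 1
          · simp only [hNfundef, dif_pos hp]; exact (hH _ hp).choose_spec.2.1
          · simp only [hNfundef, dif_neg hp]; infer_instance
        have hNot : ∀ p : H × H, (hp : p.1⁻¹ * p.2 ≠ 1) → p.1⁻¹ * p.2 ∉ Nfun p := fun p hp => by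
          simp only [hNfundef, dif_pos hp]; exact (hH _ hp).choose_spec.2.2
        set K : Subgroup H := ⨅ p : (T ×ˢ T : Finset (H × H)), Nfun p with hKdef
        haveI hKn : K.Normal := WRF.normal_iInf' _ fun p => hNrm p
        haveI hKfi : K.FiniteIndex := Subgroup.finiteIndex_iInf fun p => hFI p
        haveI : Finite (H ⧸ K) := K.finite_quotient_of_finiteIndex
        apply WRF.exists_of_hom
          ((WRF.wreathMapSnd (A := G ⧸ M) K).comp
            (WRF.wreathMapFst (H := H) (QuotientGroup.mk' M)))
        intro hcon
        rw [hw1] at hcon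
        set f' : restrictedProd (G ⧸ M) H := WRF.mapRP (QuotientGroup.mk' M) f with hf'def
        have hl : (((WRF.wreathMapSnd (A := G ⧸ M) K).comp
            (WRF.wreathMapFst (H := H) (QuotientGroup.mk' M))) (inl f)).left
            = WRF.cosetSum K f' := rfl
        have hval := congrArg
          (fun x : RWreath (G ⧸ M) (H ⧸ K) =>
            ((x.left : restrictedProd (G ⧸ M) (H ⧸ K)) : H ⧸ K → G ⧸ M) (QuotientGroup.mk h0))
          hcon
        simp only [hl] at hval
        -- separation hypothesis
        have hsep : ∀ x ∈ Function.mulSupport (f' : H → G ⧸ M), x ≠ h0 → h0⁻¹ * x ∉ K := by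
          intro x hx hxne hxK
          have hxf : x ∈ Function.mulSupport (f : H → G) := by
            rw [Function.mem_mulSupport] at hx ⊢
            intro hfx
            apply hx
            rw [hf'def, WRF.mapRP_apply, hfx, map_one]
          have hh0f : h0 ∈ Function.mulSupport (f : H → G) := hh0
          have hmem : (h0, x) ∈ T ×ˢ T := by
            rw [Finset.mem_product]
            exact ⟨f.2.mem_toFinset.2 hh0f, f.2.mem_toFinset.2 hxf⟩
          have hp : (h0, x).1⁻¹ * (h0, x).2 ≠ 1 := by
            simp only
            intro e
            exact hxne ((inv_mul_eq_one.1 e).symm)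
          have hle : h0⁻¹ * x ∈ Nfun (h0, x) :=
            Subgroup.mem_iInf.1 hxK ⟨(h0, x), hmem⟩
          exact hNot _ hp hle
        have heval := WRF.cosetSum_eval K f' h0 hsep
        rw [heval] at hval
        have : QuotientGroup.mk ((f : H → G) h0) = (1 : G ⧸ M) := hval
        exact hM3 ((QuotientGroup.eq_one_iff _).1 this)
    · -- `w` maps to a nontrivial element of `H`.
      obtain ⟨N, hN1, hN2, hN3⟩ := hH _ hrw
      haveI := hN1
      haveI := hN2
      haveI : Finite (H ⧸ N) := N.finite_quotient_of_finiteIndex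
      apply WRF.exists_of_hom ((QuotientGroup.mk' N).comp (rightHom (φ := shiftHom G H)))
      intro hcon
      apply hN3
      have : QuotientGroup.mk (w.right) = (1 : H ⧸ N) := hcon
      exact (QuotientGroup.eq_one_iff _).1 this

end
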